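/- For every prime power q and every positive integer k, the digraph H_k^q is regular with every vertex having out-degree q^{2(k-1)} − 1 and in-degree q^{2(k-1)} − 1. -/

import Mathlib

set_option linter.unusedSectionVars false
set_option linter.unnecessarySimpa false
set_option linter.unusedVariables false

/-- The standard bilinear form `⟨v,w⟩ = ∑ i, v i * w i` on `F^k`. -/
def bil {k : ℕ} {F : Type} [Field F] (v w : Fin k → F) : F := ∑ i, v i * w i

/-- A vector is *normal* if its first nonzero entry equals `1`. -/
def IsNormal {k : ℕ} {F : Type} [Field F] (v : Fin k → F) : Prop :=
  ∃ i : Fin k, v i = 1 ∧ ∀ j : Fin k, j < i → v j = 0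

/-- The vertex set `W` of the digraph `H_k^q`. -/
def IsHVertex {k : ℕ} {F : Type} [Field F] (p : (Fin k → F) × (Fin k → F)) : Prop :=
  IsNormal p.1 ∧ IsNormal p.2 ∧ bil p.1 p.2 ≠ 0

/-- The vertices of the digraph `H_k^q`. -/
abbrev HVtx (k : ℕ) (F : Type) [Field F] : Type :=
  {p : (Fin k → F) × (Fin k → F) // IsHVertex p}

/-- The (loopless) adjacency of `H_k^q`: there is an edge from the vertex `(v,w)` to a
distinct vertex `(v',w')` iff `⟨v,w'⟩ ≠ 0`. -/
def HAdj {k : ℕ} {F : Type} [Field F] (a b : HVtx k F) : Prop :=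
  a ≠ b ∧ bil a.val.1 b.val.2 ≠ 0

section aux
variable {k : ℕ} {F : Type} [Field F] [Fintype F]

lemma bil_comm (v w : Fin k → F) : bil v w = bil w v := by
  simp [bil, mul_comm]

lemma bil_smul (c : F) (u x : Fin k → F) : bil u (c • x) = c * bil u x := by
  simp only [bil, Finset.mul_sum, Pi.smul_apply, smul_eq_mul]
  exact Finset.sum_congr rfl fun i _ => by ring

lemma bil_ne_zero_right {u x : Fin k → F} (h : bil u x ≠ 0) : x ≠ 0 := by
  rintro rfl; simp [bil] at h

lemma bil_ne_zero_left {u x : Fin k → F} (h : bil u x ≠ 0) : u ≠ 0 := by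
  rintro rfl; simp [bil] at h

lemma sum_split (i : Fin k) (f : Fin k → F) :
    ∑ j, f j = f i + ∑ j : {j : Fin k // j ≠ i}, f j.val := by
  classical
  rw [← Finset.sum_subtype (Finset.univ.erase i) (fun x => by simp) f]
  exact (Finset.add_sum_erase _ f (Finset.mem_univ i)).symm

noncomputable def solveFun (u : Fin k → F) (i : Fin k) (c : F)
    (t : {j : Fin k // j ≠ i} → F) : Fin k → F := fun j =>
  if h : j = i then (c - ∑ j' : {j : Fin k // j ≠ i}, u j'.val * t j') / u i else t ⟨j, h⟩

lemma solveFun_apply_ne (u : Fin k → F) (i : Fin k) (c : F) (t : {j : Fin k // j ≠ i} → F)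
    {j : Fin k} (h : j ≠ i) : solveFun u i c t j = t ⟨j, h⟩ := dif_neg h

lemma solveFun_apply_eq (u : Fin k → F) (i : Fin k) (c : F) (t : {j : Fin k // j ≠ i} → F) :
    solveFun u i c t i = (c - ∑ j' : {j : Fin k // j ≠ i}, u j'.val * t j') / u i := dif_pos rfl

lemma bil_solveFun {u : Fin k → F} {i : Fin k} (hi : u i ≠ 0) (c : F)
    (t : {j : Fin k // j ≠ i} → F) : bil u (solveFun u i c t) = c := by
  rw [show bil u (solveFun u i c t) = ∑ j, u j * solveFun u i c t j from rfl,
    sum_split i (fun j => u j * solveFun u i c t j), solveFun_apply_eq]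
  have h2 : ∑ j : {j : Fin k // j ≠ i}, u j.val * solveFun u i c t j.val
      = ∑ j : {j : Fin k // j ≠ i}, u j.val * t j :=
    Finset.sum_congr rfl fun j _ => by rw [solveFun_apply_ne u i c t j.2]
  rw [h2]
  field_simp
  ring

noncomputable def bilEquiv {u : Fin k → F} (i : Fin k) (hi : u i ≠ 0) :
    (Fin k → F) ≃ F × ({j : Fin k // j ≠ i} → F) where
  toFun x := (bil u x, fun j => x j.val)
  invFun p := solveFun u i p.1 p.2
  left_inv x := by
    funext j
    by_cases h : j = i
    · subst h
      show solveFun u j (bil u x) (fun j' => x j'.val) j = x j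
      rw [solveFun_apply_eq]
      rw [show bil u x = ∑ j', u j' * x j' from rfl, sum_split j (fun j' => u j' * x j'),
        add_sub_cancel_right, mul_div_cancel_left₀ _ hi]
    · exact solveFun_apply_ne u i _ _ h
  right_inv p := by
    obtain ⟨c, t⟩ := p
    simp only [Prod.mk.injEq]
    exact ⟨bil_solveFun hi c t, funext fun j => solveFun_apply_ne u i c t j.2⟩

lemma card_bil_ne_zero {u : Fin k → F} (hu : u ≠ 0) :
    Nat.card {x : Fin k → F // bil u x ≠ 0}
      = (Fintype.card F - 1) * Fintype.card F ^ (k - 1) := by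
  classical
  obtain ⟨i, hi⟩ : ∃ i, u i ≠ 0 := by
    by_contra h; push_neg at h; exact hu (funext h)
  have e1 : {x : Fin k → F // bil u x ≠ 0} ≃ {p : F × ({j : Fin k // j ≠ i} → F) // p.1 ≠ 0} :=
    (bilEquiv i hi).subtypeEquiv (fun x => by simp [bilEquiv])
  have e2 : {p : F × ({j : Fin k // j ≠ i} → F) // p.1 ≠ 0}
      ≃ {c : F // c ≠ 0} × ({j : Fin k // j ≠ i} → F) :=
    Equiv.prodSubtypeFstEquivSubtypeProd (p := fun c : F => c ≠ 0)
  rw [Nat.card_congr (e1.trans e2), Nat.card_prod]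
  have hc1 : Nat.card {c : F // c ≠ 0} = Fintype.card F - 1 := by
    rw [Nat.card_eq_fintype_card]
    simpa using Fintype.card_subtype_compl (fun c : F => c = 0)
  have hc2 : Nat.card ({j : Fin k // j ≠ i} → F) = Fintype.card F ^ (k - 1) := by
    rw [Nat.card_eq_fintype_card, Fintype.card_fun]
    congr 1
    simpa using Fintype.card_subtype_compl (fun j : Fin k => j = i)
  rw [hc1, hc2]

lemma exists_normal_decomp (x : Fin k → F) (hx : x ≠ 0) :
    ∃ (c : F) (n : Fin k → F), c ≠ 0 ∧ IsNormal n ∧ x = c • n := by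
  classical
  have hne : (Finset.univ.filter (fun i => x i ≠ 0)).Nonempty := by
    by_contra h
    rw [Finset.not_nonempty_iff_eq_empty, Finset.filter_eq_empty_iff] at h
    exact hx (funext fun i => by simpa using h (Finset.mem_univ i))
  set i := (Finset.univ.filter (fun i => x i ≠ 0)).min' hne with hidef
  have hxi : x i ≠ 0 := by
    have := (Finset.univ.filter (fun i => x i ≠ 0)).min'_mem hne
    simpa using this
  refine ⟨x i, (x i)⁻¹ • x, hxi, ⟨i, ?_, ?_⟩, ?_⟩
  · simp [inv_mul_cancel₀ hxi]
  · intro j hj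
    by_contra hxj
    have hj' : j ∈ Finset.univ.filter (fun i => x i ≠ 0) := by
      simp only [Pi.smul_apply, smul_eq_mul] at hxj
      simp only [Finset.mem_filter, Finset.mem_univ, true_and]
      intro h0
      exact hxj (by simp [h0])
    exact absurd (Finset.min'_le _ j hj') (not_le.mpr hj)
  · funext j; simp [mul_inv_cancel_left₀ hxi]

lemma normal_smul_inj {c c' : F} {n n' : Fin k → F} (hc : c ≠ 0) (hc' : c' ≠ 0)
    (hn : IsNormal n) (hn' : IsNormal n') (h : c • n = c' • n') : c = c' ∧ n = n' := by
  obtain ⟨i, hi1, hi0⟩ := hn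
  obtain ⟨i', hi'1, hi'0⟩ := hn'
  have happ : ∀ j, c * n j = c' * n' j := fun j => by
    have := congrFun h j; simpa using this
  have hii' : i = i' := by
    rcases lt_trichotomy i i' with hlt | heq | hgt
    · have := happ i
      rw [hi1, hi'0 i hlt, mul_one, mul_zero] at this
      exact absurd this hc
    · exact heq
    · have := happ i'
      rw [hi'1, hi0 i' hgt, mul_one, mul_zero] at this
      exact absurd this.symm hc'
  subst hii'
  have hcc' : c = c' := by
    have := happ i; rwa [hi1, hi'1, mul_one, mul_one] at this
  subst hcc'
  refine ⟨rfl, funext fun j => ?_⟩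
  have := happ j
  exact mul_left_cancel₀ hc this

lemma card_normal_bil {u : Fin k → F} (hu : u ≠ 0) :
    Nat.card {n : Fin k → F // IsNormal n ∧ bil u n ≠ 0} = Fintype.card F ^ (k - 1) := by
  classical
  have e : {c : F // c ≠ 0} × {n : Fin k → F // IsNormal n ∧ bil u n ≠ 0}
      ≃ {x : Fin k → F // bil u x ≠ 0} := by
    refine Equiv.ofBijective
      (fun p => ⟨(p.1.val : F) • p.2.val, by
        rw [bil_smul]; exact mul_ne_zero p.1.2 p.2.2.2⟩) ⟨?_, ?_⟩
    · rintro ⟨⟨c, hc⟩, ⟨n, hn, hbn⟩⟩ ⟨⟨c', hc'⟩, ⟨n', hn', hbn'⟩⟩ hpq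
      have := normal_smul_inj hc hc' hn hn' (congrArg Subtype.val hpq)
      simp only [Prod.mk.injEq, Subtype.mk.injEq]
      exact this
    · rintro ⟨x, hx⟩
      obtain ⟨c, n, hc, hn, rfl⟩ := exists_normal_decomp x (bil_ne_zero_right hx)
      have hbn : bil u n ≠ 0 := by
        rw [bil_smul] at hx
        exact fun h0 => hx (by rw [h0, mul_zero])
      exact ⟨⟨⟨c, hc⟩, ⟨n, hn, hbn⟩⟩, rfl⟩
  have hcard := Nat.card_congr e
  rw [Nat.card_prod, card_bil_ne_zero hu] at hcard
  have hc1 : Nat.card {c : F // c ≠ 0} = Fintype.card F - 1 := by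
    rw [Nat.card_eq_fintype_card]
    simpa using Fintype.card_subtype_compl (fun c : F => c = 0)
  rw [hc1] at hcard
  have hq : 1 < Fintype.card F := Fintype.one_lt_card
  have h1 : Fintype.card F - 1 ≠ 0 := by omega
  exact Nat.eq_of_mul_eq_mul_left (Nat.pos_of_ne_zero h1) hcard

/-- generic count: subtype minus a distinguished element -/
lemma card_ne_and {α : Type} [Finite α] (a : α) (P : α → Prop) (ha : P a) :
    Nat.card {b : α // b ≠ a ∧ P b} = Nat.card {b : α // P b} - 1 := by
  classical
  have : Fintype α := Fintype.ofFinite α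
  simp only [Nat.card_eq_fintype_card, Fintype.card_subtype]
  rw [show (Finset.univ.filter fun b => b ≠ a ∧ P b) = (Finset.univ.filter P).erase a by
    ext b; simp [and_comm]]
  rw [Finset.card_erase_of_mem (by simp [ha])]

def outEquiv (v : Fin k → F) :
    {p : (Fin k → F) × (Fin k → F) // IsHVertex p ∧ bil v p.2 ≠ 0}
      ≃ Σ w' : {w' : Fin k → F // IsNormal w' ∧ bil v w' ≠ 0},
          {v' : Fin k → F // IsNormal v' ∧ bil v' w'.val ≠ 0} where
  toFun p := ⟨⟨p.val.2, p.prop.1.2.1, p.prop.2⟩, ⟨p.val.1, p.prop.1.1, p.prop.1.2.2⟩⟩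
  invFun s := ⟨(s.2.val, s.1.val), ⟨s.2.prop.1, s.1.prop.1, s.2.prop.2⟩, s.1.prop.2⟩
  left_inv p := rfl
  right_inv s := rfl

def inEquiv (w : Fin k → F) :
    {p : (Fin k → F) × (Fin k → F) // IsHVertex p ∧ bil p.1 w ≠ 0}
      ≃ Σ v' : {v' : Fin k → F // IsNormal v' ∧ bil v' w ≠ 0},
          {w' : Fin k → F // IsNormal w' ∧ bil v'.val w' ≠ 0} where
  toFun p := ⟨⟨p.val.1, p.prop.1.1, p.prop.2⟩, ⟨p.val.2, p.prop.1.2.1, p.prop.1.2.2⟩⟩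
  invFun s := ⟨(s.1.val, s.2.val), ⟨s.1.prop.1, s.2.prop.1, s.2.prop.2⟩, s.1.prop.2⟩
  left_inv p := rfl
  right_inv s := rfl

/-- count a sigma type whose fibers all have the same (known) cardinality -/
lemma card_sigma_const {ι : Type} [Finite ι] (f : ι → Type) [∀ i, Finite (f i)] (N : ℕ)
    (h : ∀ i, Nat.card (f i) = N) :
    Nat.card (Σ i, f i) = Nat.card ι * N := by
  classical
  have efib : ∀ i, f i ≃ Fin N := fun i => by
    have : Fintype (f i) := Fintype.ofFinite _
    exact Fintype.equivFinOfCardEq (by rw [← Nat.card_eq_fintype_card, h i])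
  rw [Nat.card_congr ((Equiv.sigmaCongrRight efib).trans (Equiv.sigmaEquivProd ι (Fin N))),
    Nat.card_prod, Nat.card_eq_fintype_card (α := Fin N), Fintype.card_fin]

lemma card_out_total {v : Fin k → F} (hv : v ≠ 0) :
    Nat.card {p : (Fin k → F) × (Fin k → F) // IsHVertex p ∧ bil v p.2 ≠ 0}
      = Fintype.card F ^ (k - 1) * Fintype.card F ^ (k - 1) := by
  rw [Nat.card_congr (outEquiv v)]
  rw [card_sigma_const _ (Fintype.card F ^ (k - 1)) (fun w' => by
    have hw' : w'.val ≠ 0 := bil_ne_zero_right w'.prop.2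
    rw [Nat.card_congr (Equiv.subtypeEquivRight (fun v' => by rw [bil_comm]))]
    exact card_normal_bil hw')]
  congr 1
  exact card_normal_bil hv

lemma card_in_total {w : Fin k → F} (hw : w ≠ 0) :
    Nat.card {p : (Fin k → F) × (Fin k → F) // IsHVertex p ∧ bil p.1 w ≠ 0}
      = Fintype.card F ^ (k - 1) * Fintype.card F ^ (k - 1) := by
  rw [Nat.card_congr (inEquiv w)]
  rw [card_sigma_const _ (Fintype.card F ^ (k - 1)) (fun v' => by
    have hv' : v'.val ≠ 0 := bil_ne_zero_left v'.prop.2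
    exact card_normal_bil hv')]
  congr 1
  rw [Nat.card_congr (Equiv.subtypeEquivRight (fun v' => by rw [bil_comm]))]
  exact card_normal_bil hw

end aux

/-- For every prime power `q` and positive integer `k`, the digraph `H_k^q` is regular:
every vertex has out-degree `q^(2(k-1)) - 1` and in-degree `q^(2(k-1)) - 1`. -/
theorem Hkq_regular (q k : ℕ) (hq : IsPrimePow q) (hk : 0 < k)
    (F : Type) [Field F] [Fintype F] (hF : Fintype.card F = q) (a : HVtx k F) :
    Nat.card {b : HVtx k F // HAdj a b} = q ^ (2 * (k - 1)) - 1 ∧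
    Nat.card {b : HVtx k F // HAdj b a} = q ^ (2 * (k - 1)) - 1 := by
  classical
  obtain ⟨⟨v, w⟩, hvw⟩ := a
  have hv : v ≠ 0 := bil_ne_zero_left hvw.2.2
  have hw : w ≠ 0 := bil_ne_zero_right hvw.2.2
  have hpow : Fintype.card F ^ (k - 1) * Fintype.card F ^ (k - 1) = q ^ (2 * (k - 1)) := by
    rw [hF, ← pow_add, two_mul]
  constructor
  · have e : {b : HVtx k F // HAdj ⟨(v, w), hvw⟩ b}
        ≃ {b : HVtx k F // b ≠ ⟨(v, w), hvw⟩ ∧ bil v b.val.2 ≠ 0} :=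
      Equiv.subtypeEquivRight (fun b =>
        ⟨fun h => ⟨Ne.symm h.1, h.2⟩, fun h => ⟨Ne.symm h.1, h.2⟩⟩)
    rw [Nat.card_congr e,
      card_ne_and (⟨(v, w), hvw⟩ : HVtx k F) (fun b => bil v b.val.2 ≠ 0) hvw.2.2]
    rw [Nat.card_congr (Equiv.subtypeSubtypeEquivSubtypeInter
      (fun p : (Fin k → F) × (Fin k → F) => IsHVertex p) (fun p => bil v p.2 ≠ 0))]
    rw [card_out_total hv, hpow]
  · have e : {b : HVtx k F // HAdj b ⟨(v, w), hvw⟩}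
        ≃ {b : HVtx k F // b ≠ ⟨(v, w), hvw⟩ ∧ bil b.val.1 w ≠ 0} :=
      Equiv.subtypeEquivRight (fun b => Iff.rfl)
    rw [Nat.card_congr e,
      card_ne_and (⟨(v, w), hvw⟩ : HVtx k F) (fun b => bil b.val.1 w ≠ 0) hvw.2.2]
    rw [Nat.card_congr (Equiv.subtypeSubtypeEquivSubtypeInter
      (fun p : (Fin k → F) × (Fin k → F) => IsHVertex p) (fun p => bil p.1 w ≠ 0))]
    rw [card_in_total hw, hpow]
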